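/- If a basis (t₁, t₂) of a two-dimensional lattice satisfies ‖t₁‖ ≤ ‖t₂‖ and |⟨t₁,t₂⟩| ≤ ‖t₁‖²/2 (i.e. it is Gauss reduced), then t₁ is a shortest nonzero vector of the lattice generated by t₁ and t₂. -/

import Mathlib

/-- If a basis `(t₁, t₂)` of a two-dimensional lattice in `ℝ²` satisfies
`‖t₁‖ ≤ ‖t₂‖` and `|⟨t₁,t₂⟩| ≤ ‖t₁‖²/2` (i.e. it is Gauss reduced), then `t₁`
is a shortest nonzero vector of the lattice `{a t₁ + b t₂ : a, b ∈ ℤ}`. -/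
theorem gauss_reduced_shortest (t₁ t₂ : EuclideanSpace ℝ (Fin 2))
    (hli : LinearIndependent ℝ ![t₁, t₂])
    (hord : ‖t₁‖ ≤ ‖t₂‖)
    (hred : |(inner ℝ t₁ t₂ : ℝ)| ≤ ‖t₁‖ ^ 2 / 2) :
    ∀ a b : ℤ, ¬(a = 0 ∧ b = 0) → ‖t₁‖ ≤ ‖(a : ℝ) • t₁ + (b : ℝ) • t₂‖ := by
  intro a b hab
  set A : ℝ := (a : ℝ) with hA
  set B : ℝ := (b : ℝ) with hB
  have expand : ‖A • t₁ + B • t₂‖ ^ 2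
      = A ^ 2 * ‖t₁‖ ^ 2 + 2 * (A * B * (inner ℝ t₁ t₂ : ℝ)) + B ^ 2 * ‖t₂‖ ^ 2 := by
    rw [norm_add_sq_real, real_inner_smul_left, real_inner_smul_right, norm_smul, norm_smul]
    simp [mul_pow, sq_abs]
    ring
  have hinner : -(|A * B| * (‖t₁‖ ^ 2 / 2)) ≤ A * B * (inner ℝ t₁ t₂ : ℝ) := by
    have h1 : |A * B * (inner ℝ t₁ t₂ : ℝ)| ≤ |A * B| * (‖t₁‖ ^ 2 / 2) := by
      rw [abs_mul]
      exact mul_le_mul_of_nonneg_left hred (abs_nonneg _)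
    have := neg_abs_le (A * B * (inner ℝ t₁ t₂ : ℝ))
    linarith
  have hZ : (1 : ℤ) ≤ a ^ 2 + b ^ 2 - |a| * |b| := by
    rcases eq_or_ne a 0 with ha | ha
    · have hb : b ≠ 0 := fun hb => hab ⟨ha, hb⟩
      have h1 : 1 ≤ |b| := Int.one_le_abs hb
      have := sq_abs b
      subst ha
      simp
      nlinarith [sq_abs b]
    · rcases eq_or_ne b 0 with hb | hb
      · have h1 : 1 ≤ |a| := Int.one_le_abs ha
        subst hb
        simp
        nlinarith [sq_abs a]
      · have h1 : 1 ≤ |a| := Int.one_le_abs ha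
        have h2 : 1 ≤ |b| := Int.one_le_abs hb
        nlinarith [sq_nonneg (|a| - |b|), sq_abs a, sq_abs b]
  have hR : (1 : ℝ) ≤ A ^ 2 + B ^ 2 - |A * B| := by
    have : ((1 : ℤ) : ℝ) ≤ ((a ^ 2 + b ^ 2 - |a| * |b| : ℤ) : ℝ) := by
      exact_mod_cast hZ
    push_cast at this
    rw [abs_mul]
    convert this using 2
  have h12 : ‖t₁‖ ^ 2 ≤ ‖t₂‖ ^ 2 := by nlinarith [norm_nonneg t₁, norm_nonneg t₂]
  have hsq : ‖t₁‖ ^ 2 ≤ ‖A • t₁ + B • t₂‖ ^ 2 := by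
    rw [expand]
    nlinarith [mul_nonneg (sq_nonneg B) (sub_nonneg.mpr h12),
      mul_nonneg (sub_nonneg.mpr hR) (sq_nonneg ‖t₁‖), sq_nonneg ‖t₁‖]
  nlinarith [norm_nonneg t₁, norm_nonneg (A • t₁ + B • t₂)]
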